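/- Let p > 2 be a prime, K an algebraically closed field of characteristic p, and m ≥ 2 an integer. For n ≥ 1 let f_n := 1 + #{x ∈ K : x^{m^n} = x}, the number of fixed points of the n-th iterate of the power map x ↦ x^m on the projective line over K (the added 1 accounts for the point at infinity). Write ζ*_pt(w) = (1 − w^p)^{1/p}/(1 − w) for real 0 < w < 1. Then for every real z with 0 < z < 1/m: (a) if p divides m, then exp(∑_{n≥1, p∤n} f_n z^n/n) = ζ*_pt(mz)·ζ*_pt(z) = (1−(mz)^p)^{1/p}(1−z^p)^{1/p}/((1−mz)(1−z)); (b) if p does not divide m, then, letting s be the multiplicative order of m modulo p, e := v_p(m^s − 1), and β := (p^{−e} − 1)/s, one has exp(∑_{n≥1, p∤n} f_n z^n/n) = ζ*_pt(mz)·ζ*_pt(z)·(ζ*_pt((mz)^s)/ζ*_pt(z^s))^β, where all real powers are real powers of positive real numbers. -/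

import Mathlib

open Real

/-- Number of Q-th roots of unity in alg. closed field of char p, p ∤ Q. -/
lemma tzpm_count_roots_one (p : ℕ) (hp : p.Prime)
    (K : Type*) [Field K] [IsAlgClosed K] [CharP K p]
    (Q : ℕ) (hQ : 0 < Q) (hpQ : ¬ p ∣ Q) :
    Nat.card {x : K // x ^ Q = 1} = Q := by
  have hQK : NeZero (Q : K) := ⟨by
    rw [Ne, CharP.cast_eq_zero_iff K p]; exact hpQ⟩
  obtain ⟨ζ, hζ⟩ := HasEnoughRootsOfUnity.exists_primitiveRoot K Q
  have hset : {x : K | x ^ Q = 1} = ↑(Polynomial.nthRootsFinset Q (1 : K)) := by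
    ext x; simp [Polynomial.mem_nthRootsFinset hQ, Set.mem_setOf_eq]
  calc Nat.card {x : K // x ^ Q = 1} = ({x : K | x ^ Q = 1} : Set K).ncard :=
        (Nat.card_coe_set_eq _).symm.trans rfl
    _ = Q := by rw [hset, Set.ncard_coe_finset, hζ.card_nthRootsFinset]

lemma tzpm_count_fixed (p : ℕ) (hp : p.Prime)
    (K : Type*) [Field K] [IsAlgClosed K] [CharP K p]
    (e Q : ℕ) (hQ : 0 < Q) (hpQ : ¬ p ∣ Q) :
    Nat.card {x : K // x ^ (p ^ e * Q + 1) = x} = 1 + Q := by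
  have hsetQ : {x : K | x ^ Q = 1} = ↑(Polynomial.nthRootsFinset Q (1 : K)) := by
    ext x; simp [Polynomial.mem_nthRootsFinset hQ, Set.mem_setOf_eq]
  have hfin : ({x : K | x ^ Q = 1} : Set K).Finite := by
    rw [hsetQ]; exact (Polynomial.nthRootsFinset Q (1 : K)).finite_toSet
  have hkey : {x : K | x ^ (p ^ e * Q + 1) = x} = insert (0 : K) {x : K | x ^ Q = 1} := by
    ext x
    simp only [Set.mem_setOf_eq, Set.mem_insert_iff]
    constructor
    · intro h
      by_cases hx : x = 0
      · exact Or.inl hx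
      · right
        have h1 : x ^ (p ^ e * Q) * x = x := by rw [← pow_succ]; exact h
        have h2 : x ^ (p ^ e * Q) = 1 := by
          field_simp at h1
          exact h1
        have h3 : (x ^ Q) ^ (p ^ e) = 1 := by
          rw [← pow_mul, mul_comm]; exact h2
        haveI := Fact.mk hp
        have h4 : (x ^ Q - 1) ^ (p ^ e) = 0 := by
          rw [sub_pow_char_pow, h3, one_pow, sub_self]
        have h5 : x ^ Q - 1 = 0 := by
          exact pow_eq_zero_iff (pow_ne_zero e hp.ne_zero) |>.mp h4
        exact sub_eq_zero.mp h5
    · rintro (rfl | h)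
      · simp
      · rw [pow_succ, mul_comm (p ^ e), pow_mul, h, one_pow, one_mul]
  have h0 : (0 : K) ∉ {x : K | x ^ Q = 1} := by
    simp [Set.mem_setOf_eq, zero_pow hQ.ne', zero_ne_one]
  calc Nat.card {x : K // x ^ (p ^ e * Q + 1) = x}
      = ({x : K | x ^ (p ^ e * Q + 1) = x} : Set K).ncard := (Nat.card_coe_set_eq _)
    _ = (insert (0 : K) {x : K | x ^ Q = 1}).ncard := by rw [hkey]
    _ = {x : K | x ^ Q = 1}.ncard + 1 := Set.ncard_insert_of_notMem h0 hfin
    _ = 1 + Q := by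
      have h : {x : K | x ^ Q = 1}.ncard = Q :=
        (tzpm_count_roots_one p hp K Q hQ hpQ : Nat.card {x : K // x ^ Q = 1} = Q)
      rw [h, add_comm]

/-- log series with `n`-indexing starting at 0 (the `n = 0` term is `1/0 = 0`). -/
lemma tzpm_hasSum_log (x : ℝ) (hx : |x| < 1) :
    HasSum (fun n : ℕ => x ^ n / n) (-Real.log (1 - x)) := by
  have h1 := Real.hasSum_pow_div_log_of_abs_lt_one hx
  have h2 : HasSum (fun n : ℕ => x ^ (n + 1) / ((n + 1 : ℕ) : ℝ))
      (-Real.log (1 - x) - ∑ i ∈ Finset.range 1, x ^ i / (i : ℝ)) := by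
    simp only [Finset.range_one, Finset.sum_singleton, Nat.cast_zero, div_zero, sub_zero]
    convert h1 using 2 with n
    push_cast
    ring
  exact (hasSum_nat_add_iff' 1).mp h2

lemma tzpm_hasSum_tame (p : ℕ) (hp : 0 < p) (w : ℝ) (hw0 : 0 ≤ w) (hw1 : w < 1) :
    HasSum (fun n : ℕ => if ¬ p ∣ n then w ^ n / n else 0)
      ((p : ℝ)⁻¹ * Real.log (1 - w ^ p) - Real.log (1 - w)) := by
  have habs : |w| < 1 := by rwa [abs_of_nonneg hw0]
  have habsp : |w ^ p| < 1 := by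
    rw [abs_of_nonneg (pow_nonneg hw0 p)]
    exact pow_lt_one₀ hw0 hw1 hp.ne'
  have hF := tzpm_hasSum_log w habs
  -- sum over multiples of p
  have hG : HasSum (fun n : ℕ => if p ∣ n then w ^ n / n else 0)
      ((p : ℝ)⁻¹ * -Real.log (1 - w ^ p)) := by
    have base := (tzpm_hasSum_log (w ^ p) habsp).mul_left (p : ℝ)⁻¹
    have hinj : Function.Injective (fun k : ℕ => p * k) :=
      fun a b h => Nat.eq_of_mul_eq_mul_left hp h
    rw [← Function.Injective.hasSum_iff hinj ?_]
    · convert base using 1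
      · rfl
      funext k
      simp only [Function.comp_apply]
      rw [if_pos (Dvd.intro k rfl)]
      rcases Nat.eq_zero_or_pos k with rfl | hk
      · simp
      · have hk' : (k : ℝ) ≠ 0 := Nat.cast_ne_zero.mpr hk.ne'
        have hp' : (p : ℝ) ≠ 0 := Nat.cast_ne_zero.mpr hp.ne'
        rw [pow_mul, Nat.cast_mul]
        field_simp
    · intro n hn
      rw [if_neg]
      intro hdvd
      obtain ⟨k, rfl⟩ := hdvd
      exact hn ⟨k, rfl⟩
  have := hF.sub hG
  convert this using 1
  · rfl
  · funext n
    by_cases hn : p ∣ n <;> simp [hn]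
  · ring

lemma tzpm_exp_L (p : ℕ) (hp : 0 < p) (w : ℝ) (hw0 : 0 < w) (hw1 : w < 1) :
    Real.exp ((p : ℝ)⁻¹ * Real.log (1 - w ^ p) - Real.log (1 - w))
      = (1 - w ^ p) ^ ((p : ℝ)⁻¹) / (1 - w) := by
  have h1 : (0:ℝ) < 1 - w := by linarith
  have h2 : (0:ℝ) < 1 - w ^ p := by
    have := pow_lt_one₀ hw0.le hw1 hp.ne'
    linarith
  rw [Real.exp_sub, Real.exp_log h1, Real.rpow_def_of_pos h2, mul_comm]

/-- Explicit computation of the tame zeta function of the power map x ↦ x^m on the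
projective line over an algebraically closed field of characteristic p > 2. -/
theorem tame_zeta_power_map (p : ℕ) (hp : p.Prime) (hp2 : 2 < p)
    (K : Type*) [Field K] [IsAlgClosed K] [CharP K p]
    (m : ℕ) (hm : 2 ≤ m)
    (f : ℕ → ℕ) (hf : ∀ n : ℕ, f n = 1 + Nat.card {x : K // x ^ (m ^ n) = x})
    (zpt : ℝ → ℝ) (hzpt : ∀ w : ℝ, zpt w = (1 - w ^ p) ^ ((p : ℝ)⁻¹) / (1 - w)) :
    ∀ z : ℝ, 0 < z → z < 1 / m →
      ((p ∣ m →
          Real.exp (∑' n : ℕ, if ¬ p ∣ n then (f n : ℝ) * z ^ n / n else 0)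
            = zpt (m * z) * zpt z) ∧
       (¬ p ∣ m →
          Real.exp (∑' n : ℕ, if ¬ p ∣ n then (f n : ℝ) * z ^ n / n else 0)
            = zpt (m * z) * zpt z *
              (zpt ((m * z) ^ orderOf (m : ZMod p)) / zpt (z ^ orderOf (m : ZMod p))) ^
                (((p : ℝ) ^ (-(padicValNat p (m ^ orderOf (m : ZMod p) - 1) : ℝ)) - 1) /
                  (orderOf (m : ZMod p) : ℝ)))) := by
  haveI := Fact.mk hp
  have hp0 : 0 < p := hp.pos
  have hm0 : 0 < m := by omega
  intro z hz0 hzm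
  have hmR : (0:ℝ) < m := by exact_mod_cast hm0
  have hmz1 : (m : ℝ) * z < 1 := by
    rw [lt_div_iff₀ hmR] at hzm; linarith
  have hz1 : z < 1 := by
    have h1 : (1:ℝ)/m ≤ 1 := by
      rw [div_le_one hmR]; exact_mod_cast Nat.one_le_iff_ne_zero.mpr hm0.ne'
    linarith
  have hmz0 : (0:ℝ) < (m : ℝ) * z := by positivity
  have HA := tzpm_hasSum_tame p hp0 ((m : ℝ) * z) hmz0.le hmz1
  have HB := tzpm_hasSum_tame p hp0 z hz0.le hz1
  constructor
  · -- case p ∣ m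
    intro hpm
    have hfn : ∀ n : ℕ, ¬ p ∣ n → (f n : ℝ) = 1 + (m : ℝ) ^ n := by
      intro n hn
      have hn0 : n ≠ 0 := by rintro rfl; exact hn (dvd_zero p)
      have h2mn : 2 ≤ m ^ n := le_trans hm (Nat.le_self_pow hn0 m)
      have hpd : ¬ p ∣ (m ^ n - 1) := by
        intro h
        have h1 : p ∣ m ^ n := dvd_pow hpm hn0
        have h2 : p ∣ m ^ n - (m ^ n - 1) := Nat.dvd_sub h1 h
        have h3 : m ^ n - (m ^ n - 1) = 1 := by omega
        rw [h3] at h2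
        have := Nat.le_of_dvd one_pos h2
        omega
      have hcard := tzpm_count_fixed p hp K 0 (m ^ n - 1) (by omega) hpd
      have hexp : p ^ 0 * (m ^ n - 1) + 1 = m ^ n := by
        simp only [pow_zero, one_mul]; omega
      rw [hexp] at hcard
      rw [hf n, hcard]
      rw [Nat.cast_add, Nat.cast_add, Nat.cast_sub (by omega : 1 ≤ m ^ n)]
      push_cast
      ring
    have Htot := HA.add HB
    have hfun : (fun n : ℕ => if ¬ p ∣ n then (f n : ℝ) * z ^ n / n else 0)
        = fun n => (if ¬ p ∣ n then ((m : ℝ) * z) ^ n / n else 0)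
            + (if ¬ p ∣ n then z ^ n / n else 0) := by
      funext n
      by_cases hn : p ∣ n
      · simp [hn]
      · simp only [hn, not_false_iff, if_true]
        rw [hfn n hn, mul_pow]
        ring
    rw [hfun, Htot.tsum_eq, Real.exp_add,
      tzpm_exp_L p hp0 _ hmz0 hmz1, tzpm_exp_L p hp0 _ hz0 hz1, hzpt, hzpt]
  · -- case ¬ p ∣ m
    intro hpm
    set s := orderOf ((m : ZMod p)) with hs_def
    have hmZ : (m : ZMod p) ≠ 0 := by
      rw [Ne, ZMod.natCast_eq_zero_iff]; exact hpm
    have hsdvd : s ∣ p - 1 := orderOf_dvd_of_pow_eq_one (ZMod.pow_card_sub_one_eq_one hmZ)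
    have hs0 : 0 < s := by
      rcases Nat.eq_zero_or_pos s with h | h
      · rw [h] at hsdvd
        have := Nat.eq_zero_of_zero_dvd hsdvd
        omega
      · exact h
    have hps : ¬ p ∣ s := by
      intro h
      have h1 : s ≤ p - 1 := Nat.le_of_dvd (by omega) hsdvd
      have h2 : p ≤ s := Nat.le_of_dvd hs0 h
      omega
    have hsn : ∀ n : ℕ, (s ∣ n ↔ p ∣ m ^ n - 1) := by
      intro n
      have h1mn : 1 ≤ m ^ n := Nat.one_le_pow _ _ hm0
      rw [orderOf_dvd_iff_pow_eq_one, ← ZMod.natCast_eq_zero_iff,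
        Nat.cast_sub h1mn, Nat.cast_pow, Nat.cast_one, sub_eq_zero]
    set e := padicValNat p (m ^ s - 1) with he_def
    have hpe : p ∣ m ^ s - 1 := (hsn s).mp dvd_rfl
    have hms1 : 1 < m ^ s := Nat.one_lt_pow hs0.ne' (by omega)
    have hpms : ¬ p ∣ m ^ s := fun h => hpm (hp.dvd_of_dvd_pow h)
    have hpodd : Odd p := hp.odd_of_ne_two (by omega)
    have hval : ∀ n : ℕ, ¬ p ∣ n → s ∣ n → padicValNat p (m ^ n - 1) = e := by
      intro n hn hsn'
      obtain ⟨k, rfl⟩ := hsn'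
      have hk0 : k ≠ 0 := by rintro rfl; exact hn (by simp)
      have hpk : ¬ p ∣ k := fun h => hn (h.mul_left s)
      have hlte := padicValNat.pow_sub_pow (x := m ^ s) (y := 1) hpodd hms1
        (by simpa using hpe) hpms hk0
      rw [one_pow, ← pow_mul] at hlte
      rw [hlte, padicValNat.eq_zero_of_not_dvd hpk, add_zero]
    have hfn : ∀ n : ℕ, ¬ p ∣ n → (f n : ℝ) =
        2 + ((m : ℝ) ^ n - 1) * ((p : ℝ) ^ (padicValNat p (m ^ n - 1)))⁻¹ := by
      intro n hn
      have hn0 : n ≠ 0 := by rintro rfl; exact hn (dvd_zero p)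
      have h2mn : 2 ≤ m ^ n := le_trans hm (Nat.le_self_pow hn0 m)
      set v := padicValNat p (m ^ n - 1) with hv_def
      set Q := (m ^ n - 1) / p ^ v with hQ_def
      have hdvd : p ^ v ∣ m ^ n - 1 := pow_padicValNat_dvd
      have hQmul : p ^ v * Q = m ^ n - 1 := Nat.mul_div_cancel' hdvd
      have hmn1 : m ^ n - 1 ≠ 0 := by omega
      have hQ0 : 0 < Q := Nat.pos_of_ne_zero (by
        intro h; rw [h, Nat.mul_zero] at hQmul; omega)
      have hpQ : ¬ p ∣ Q := by
        have h1 := Nat.not_dvd_ordCompl hp hmn1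
        rwa [Nat.factorization_def _ hp] at h1
      have hcard := tzpm_count_fixed p hp K v Q hQ0 hpQ
      have hexp : p ^ v * Q + 1 = m ^ n := by omega
      rw [hexp] at hcard
      rw [hf n, hcard]
      have hpv0 : ((p : ℝ) ^ v) ≠ 0 := by positivity
      have hQreal : (Q : ℝ) = ((m : ℝ) ^ n - 1) * ((p : ℝ) ^ v)⁻¹ := by
        have hcastm : ((p ^ v * Q : ℕ) : ℝ) = ((m ^ n - 1 : ℕ) : ℝ) := by rw [hQmul]
        rw [Nat.cast_sub (by omega : 1 ≤ m ^ n)] at hcastm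
        push_cast at hcastm
        field_simp
        linarith [hcastm]
      rw [Nat.cast_add, Nat.cast_add, hQreal]
      push_cast
      ring
    -- exponent facts
    have hcinv : (p : ℝ) ^ (-(e : ℝ)) = ((p : ℝ) ^ (e : ℕ))⁻¹ := by
      rw [← Real.rpow_natCast (p : ℝ) e, ← Real.rpow_neg (by positivity)]
    set c : ℝ := (p : ℝ) ^ (-(e : ℝ)) - 1 with hc_def
    set A' : ℝ := ((m : ℝ) * z) ^ s with hA'_def
    set B' : ℝ := z ^ s with hB'_def
    have hA'0 : 0 < A' := by positivity
    have hA'1 : A' < 1 := pow_lt_one₀ hmz0.le hmz1 hs0.ne'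
    have hB'0 : 0 < B' := by positivity
    have hB'1 : B' < 1 := pow_lt_one₀ hz0.le hz1 hs0.ne'
    have base1 := tzpm_hasSum_tame p hp0 A' hA'0.le hA'1
    have base2 := tzpm_hasSum_tame p hp0 B' hB'0.le hB'1
    set L1 : ℝ := (p : ℝ)⁻¹ * Real.log (1 - A' ^ p) - Real.log (1 - A') with hL1_def
    set L2 : ℝ := (p : ℝ)⁻¹ * Real.log (1 - B' ^ p) - Real.log (1 - B') with hL2_def
    set D : ℕ → ℝ := fun n => if s ∣ n ∧ ¬ p ∣ n then (((m : ℝ) * z) ^ n - z ^ n) / n else 0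
      with hD_def
    have hDsum : HasSum D ((L1 - L2) * (s : ℝ)⁻¹) := by
      have comb := (base1.sub base2).mul_right (s : ℝ)⁻¹
      have hinj : Function.Injective (fun k : ℕ => s * k) :=
        fun a b h => Nat.eq_of_mul_eq_mul_left hs0 h
      rw [← Function.Injective.hasSum_iff hinj ?_]
      · convert comb using 1
        · rfl
        funext k
        simp only [Function.comp_apply, hD_def]
        have hdvds : s ∣ s * k := Dvd.intro k rfl
        by_cases hk : p ∣ k
        · have hk' : p ∣ s * k := hk.mul_left s
          rw [if_neg (by rintro ⟨-, h2⟩; exact h2 hk'),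
            if_neg (not_not_intro hk), if_neg (not_not_intro hk)]
          ring
        · have hpsk : ¬ p ∣ s * k := by
            rw [Nat.Prime.dvd_mul hp]
            rintro (h | h)
            exacts [hps h, hk h]
          rw [if_pos ⟨hdvds, hpsk⟩, if_pos hk, if_pos hk]
          have hk0 : k ≠ 0 := by rintro rfl; exact hk (dvd_zero p)
          have hkR : ((k : ℝ)) ≠ 0 := Nat.cast_ne_zero.mpr hk0
          have hsR : ((s : ℝ)) ≠ 0 := Nat.cast_ne_zero.mpr hs0.ne'
          rw [hA'_def, hB'_def, ← pow_mul, ← pow_mul, Nat.cast_mul,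
            div_sub_div_same, mul_comm ((s : ℝ)) ((k : ℝ)), ← div_div, div_eq_mul_inv]
      · intro n hn
        rw [hD_def]
        refine if_neg ?_
        rintro ⟨⟨k, rfl⟩, -⟩
        exact hn ⟨k, rfl⟩
    have hfun : (fun n : ℕ => if ¬ p ∣ n then (f n : ℝ) * z ^ n / n else 0)
        = fun n => ((if ¬ p ∣ n then ((m : ℝ) * z) ^ n / n else 0)
            + (if ¬ p ∣ n then z ^ n / n else 0)) + c * D n := by
      funext n
      by_cases hn : p ∣ n
      · simp [hD_def, hn]
      · have hn' : ¬ p ∣ n := hn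
        simp only [hD_def, if_pos hn']
        by_cases hs' : s ∣ n
        · rw [if_pos ⟨hs', hn'⟩, hfn n hn, hval n hn hs', hc_def, hcinv, mul_pow]
          ring
        · rw [if_neg (by rintro ⟨h, -⟩; exact hs' h), hfn n hn,
            padicValNat.eq_zero_of_not_dvd (fun h => hs' ((hsn n).mpr h)), mul_pow]
          simp only [pow_zero, inv_one, mul_one]
          ring
    have Htot := (HA.add HB).add (hDsum.mul_left c)
    rw [hfun, Htot.tsum_eq, Real.exp_add, Real.exp_add,
      tzpm_exp_L p hp0 _ hmz0 hmz1, tzpm_exp_L p hp0 _ hz0 hz1, ← hzpt, ← hzpt]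
    congr 1
    have h1 : zpt A' = Real.exp L1 := by rw [hzpt, hL1_def, tzpm_exp_L p hp0 _ hA'0 hA'1]
    have h2 : zpt B' = Real.exp L2 := by rw [hzpt, hL2_def, tzpm_exp_L p hp0 _ hB'0 hB'1]
    rw [h1, h2, ← Real.exp_sub, Real.rpow_def_of_pos (Real.exp_pos _), Real.log_exp,
      Real.exp_eq_exp]
    rw [hc_def]
    ring
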